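/- Let ℓ : Ω → ℝ be a random variable with |ℓ| ≤ 1, let Σ be a fixed d×d positive definite matrix, and let Φ be an ℝ^d-valued random vector, with E[Φ Φᵀ] = Σ. Define the random vector θ̂ = Σ⁻¹ Φ ℓ. Then for any fixed ψ ∈ ℝ^d, E[(ψᵀ θ̂)²] ≤ ψᵀ Σ⁻¹ ψ. -/

import Mathlib

open Matrix MeasureTheory

theorem stmt_9 (d : ℕ) (Ω : Type*) [MeasurableSpace Ω]
    (μ : Measure Ω) [IsProbabilityMeasure μ]
    (ℓ : Ω → ℝ) (hℓ : ∀ ω, |ℓ ω| ≤ 1)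
    (Φ : Ω → (Fin d → ℝ))
    (S : Matrix (Fin d) (Fin d) ℝ) (hS : S.PosDef) (hSs : S.IsSymm)
    (hmom : ∀ i j, ∫ ω, Φ ω i * Φ ω j ∂μ = S i j)
    (hint : ∀ i j, Integrable (fun ω => Φ ω i * Φ ω j) μ)
    (θhat : Ω → (Fin d → ℝ))
    (hθhat : ∀ ω, θhat ω = S⁻¹ *ᵥ (ℓ ω • Φ ω))
    (ψ : Fin d → ℝ) :
    ∫ ω, (ψ ⬝ᵥ θhat ω) ^ 2 ∂μ ≤ ψ ⬝ᵥ (S⁻¹ *ᵥ ψ) := by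
  set v : Fin d → ℝ := S⁻¹ *ᵥ ψ with hv
  have hSinvT : S⁻¹ᵀ = S⁻¹ := by
    rw [Matrix.transpose_nonsing_inv, hSs.eq]
  have hkey : ∀ ω, ψ ⬝ᵥ θhat ω = ℓ ω * (v ⬝ᵥ Φ ω) := by
    intro ω
    rw [hθhat ω, Matrix.dotProduct_mulVec, ← Matrix.mulVec_transpose, hSinvT,
      dotProduct_smul]
    rfl
  have hptwise : ∀ ω, (ψ ⬝ᵥ θhat ω) ^ 2 ≤ (v ⬝ᵥ Φ ω) ^ 2 := by
    intro ω
    rw [hkey ω, mul_pow]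
    have h1 : (ℓ ω) ^ 2 ≤ 1 := by
      have := hℓ ω
      nlinarith [abs_nonneg (ℓ ω), sq_abs (ℓ ω)]
    nlinarith [sq_nonneg (v ⬝ᵥ Φ ω)]
  have hint2 : Integrable (fun ω => (v ⬝ᵥ Φ ω) ^ 2) μ := by
    have : (fun ω => (v ⬝ᵥ Φ ω) ^ 2)
        = fun ω => ∑ i, ∑ j, v i * v j * (Φ ω i * Φ ω j) := by
      funext ω
      simp [sq, dotProduct, Finset.sum_mul, Finset.mul_sum]
      ring_nf
      congr 1; funext i; congr 1; funext j; ring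
    rw [this]
    apply integrable_finset_sum
    intro i _
    apply integrable_finset_sum
    intro j _
    exact (hint i j).const_mul _
  by_cases hintL : Integrable (fun ω => (ψ ⬝ᵥ θhat ω) ^ 2) μ
  swap
  · rw [integral_undef hintL]
    have := (hS.inv).posSemidef.dotProduct_mulVec_nonneg ψ
    simpa using this
  have hstep : ∫ ω, (ψ ⬝ᵥ θhat ω) ^ 2 ∂μ ≤ ∫ ω, (v ⬝ᵥ Φ ω) ^ 2 ∂μ :=
    integral_mono hintL hint2 hptwise
  refine hstep.trans ?_
  have hval : ∫ ω, (v ⬝ᵥ Φ ω) ^ 2 ∂μ = v ⬝ᵥ (S *ᵥ v) := by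
    have : (fun ω => (v ⬝ᵥ Φ ω) ^ 2)
        = fun ω => ∑ i, ∑ j, v i * v j * (Φ ω i * Φ ω j) := by
      funext ω
      simp [sq, dotProduct, Finset.sum_mul, Finset.mul_sum]
      congr 1; funext i; congr 1; funext j; ring
    rw [this]
    rw [integral_finset_sum]
    · simp_rw [fun i => integral_finset_sum Finset.univ
        (fun j _ => ((hint i j).const_mul (v i * v j)))]
      simp_rw [integral_const_mul, hmom]
      simp [dotProduct, Matrix.mulVec, Finset.mul_sum]
      congr 1; funext i; congr 1; funext j; ring
    · intro i _
      exact integrable_finset_sum _ fun j _ => (hint i j).const_mul _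
  rw [hval]
  have : S *ᵥ v = ψ := by
    rw [hv, Matrix.mulVec_mulVec, Matrix.mul_nonsing_inv _ (isUnit_iff_ne_zero.mpr hS.det_pos.ne'), Matrix.one_mulVec]
  rw [this, dotProduct_comm]
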